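/- Let R be a commutative ring, α, β ∈ R, and n ≥ 2. The group endomorphism of B_n determined by b_i ↦ b_i⁻¹ (which is a well-defined automorphism since the Artin relations are palindromic) induces an R-algebra isomorphism φ : H(Q_{−β,−α}, n) → H(Q_{α,β}, n); indeed in H(Q_{α,β}, n) one has (b_i⁻¹)³ + β(b_i⁻¹)² + α·b_i⁻¹ − 1 = −b_i⁻³·(b_i³ − α·b_i² − β·b_i − 1) = 0. Moreover φ maps the two-sided ideal I_n of H(Q_{−β,−α}, n) onto the two-sided ideal I_n of H(Q_{α,β}, n) (in particular the image of R₀ with parameters (−β,−α) equals b₁·R₀ computed with parameters (α,β)), and hence φ induces an R-algebra isomorphism K_n(−β,−α) ≅ K_n(α,β). -/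

import Mathlib

def braidRels (m : ℕ) : Set (FreeGroup (Fin m)) :=
  { r | (∃ i j : Fin m, (i : ℕ) + 1 < (j : ℕ) ∧
          r = FreeGroup.of i * FreeGroup.of j * (FreeGroup.of i)⁻¹ * (FreeGroup.of j)⁻¹) ∨
        (∃ i j : Fin m, (j : ℕ) = (i : ℕ) + 1 ∧
          r = FreeGroup.of i * FreeGroup.of j * FreeGroup.of i *
              (FreeGroup.of j * FreeGroup.of i * FreeGroup.of j)⁻¹) }

abbrev BraidGroup (n : ℕ) := PresentedGroup (braidRels (n - 1))

def braidGen (n : ℕ) (i : Fin (n - 1)) : BraidGroup n := PresentedGroup.of i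

theorem braid_mk_eq_one {m : ℕ} {r : FreeGroup (Fin m)} (hr : r ∈ braidRels m) :
    PresentedGroup.mk (braidRels m) r = 1 :=
  (QuotientGroup.eq_one_iff r).mpr (Subgroup.subset_normalClosure hr)

noncomputable def braidIncl (n : ℕ) : BraidGroup n →* BraidGroup (n + 1) :=
  PresentedGroup.toGroup
    (f := fun i => braidGen (n + 1) (Fin.castLE (by omega : n - 1 ≤ n + 1 - 1) i))
    (by
      rintro r (⟨i, j, hij, rfl⟩ | ⟨i, j, hij, rfl⟩)
      · have h1 := braid_mk_eq_one (m := n + 1 - 1)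
          (Or.inl ⟨Fin.castLE (by omega) i, Fin.castLE (by omega) j, by simpa using hij, rfl⟩)
        simp only [map_mul, map_inv, FreeGroup.lift_apply_of] at h1 ⊢
        exact h1
      · have h1 := braid_mk_eq_one (m := n + 1 - 1)
          (Or.inr ⟨Fin.castLE (by omega) i, Fin.castLE (by omega) j, by simpa using hij, rfl⟩)
        simp only [map_mul, map_inv, FreeGroup.lift_apply_of] at h1 ⊢
        exact h1)

theorem braidIncl_gen (n : ℕ) (i : Fin (n - 1)) :
    braidIncl n (braidGen n i) = braidGen (n + 1) (Fin.castLE (by omega) i) :=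
  PresentedGroup.toGroup.of _

variable (R : Type) [CommRing R]

noncomputable def gb (n : ℕ) (i : Fin (n - 1)) : MonoidAlgebra R (BraidGroup n) :=
  MonoidAlgebra.of R (BraidGroup n) (braidGen n i)

inductive cubicRel (α β : R) (n : ℕ) :
    MonoidAlgebra R (BraidGroup n) → MonoidAlgebra R (BraidGroup n) → Prop
  | cube (i : Fin (n - 1)) :
      cubicRel α β n (gb R n i ^ 3) (α • gb R n i ^ 2 + β • gb R n i + 1)

abbrev CubicHecke (α β : R) (n : ℕ) := RingQuot (cubicRel R α β n)

noncomputable def hb (α β : R) (n : ℕ) (i : Fin (n - 1)) : CubicHecke R α β n :=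
  RingQuot.mkAlgHom R (cubicRel R α β n) (gb R n i)

theorem mapDomain_gb (n : ℕ) (i : Fin (n - 1)) :
    (MonoidAlgebra.mapDomainAlgHom R R (braidIncl n)) (gb R n i)
      = gb R (n + 1) (Fin.castLE (by omega) i) := by
  simp only [gb, MonoidAlgebra.mapDomainAlgHom_apply, MonoidAlgebra.of_apply,
    MonoidAlgebra.mapDomain_single, braidIncl_gen]

noncomputable def heckeIncl (α β : R) (n : ℕ) :
    CubicHecke R α β n →ₐ[R] CubicHecke R α β (n + 1) :=
  RingQuot.liftAlgHom R
    ⟨(RingQuot.mkAlgHom R (cubicRel R α β (n + 1))).comp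
        (MonoidAlgebra.mapDomainAlgHom R R (braidIncl n)),
      by
        rintro x y ⟨i⟩
        have h2 : (MonoidAlgebra.mapDomainAlgHom R R (braidIncl n)) (gb R n i ^ 3)
            = gb R (n + 1) (Fin.castLE (by omega) i) ^ 3 := by
          rw [map_pow, mapDomain_gb]
        have h3 : (MonoidAlgebra.mapDomainAlgHom R R (braidIncl n))
              (α • gb R n i ^ 2 + β • gb R n i + 1)
            = α • gb R (n + 1) (Fin.castLE (by omega) i) ^ 2
              + β • gb R (n + 1) (Fin.castLE (by omega) i) + 1 := by
          rw [map_add, map_add, map_smul, map_smul, map_pow, map_one, mapDomain_gb]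
        simp only [AlgHom.comp_apply, h2, h3]
        exact RingQuot.mkAlgHom_rel R (cubicRel.cube _)⟩

theorem heckeIncl_gen (α β : R) (n : ℕ) (i : Fin (n - 1)) :
    heckeIncl R α β n (hb R α β n i) = hb R α β (n + 1) (Fin.castLE (by omega) i) := by
  simp only [heckeIncl, hb, RingQuot.liftAlgHom_mkAlgHom_apply, AlgHom.comp_apply, mapDomain_gb]

noncomputable def R0elt {A : Type*} [Ring A] [Algebra R A] (α β : R) (x y : A) : A :=
  y * x ^ 2 * y
  + (β ^ 2 - α) • (x ^ 2 * y ^ 2 * x ^ 2)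
  + (α ^ 2 - α * β ^ 2 - β) • (x * y ^ 2 * x ^ 2 + x ^ 2 * y ^ 2 * x)
  + (α ^ 2 - α * β ^ 2) • (x ^ 2 * y * x ^ 2)
  + (1 + 2 * α * β + α ^ 2 * β ^ 2 - α ^ 3) • (x * y ^ 2 * x)
  + (1 + α * β + α ^ 2 * β ^ 2 - α ^ 3) • (x * y * x ^ 2 + x ^ 2 * y * x)
  + (1 + 2 * α * β - β ^ 3) • (y ^ 2 * x ^ 2 + x ^ 2 * y ^ 2)
  + (α * β ^ 3 - 2 * α - 2 * α ^ 2 * β) • (y * x ^ 2 + x ^ 2 * y)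
  + (α * β ^ 3 - 2 * α - 2 * α ^ 2 * β + β ^ 2) • (y ^ 2 * x + x * y ^ 2)
  + (α ^ 4 - α ^ 3 * β ^ 2 - 2 * α ^ 2 * β - 3 * α) • (x * y * x)
  + (2 * α ^ 3 * β + 3 * α ^ 2 - α ^ 2 * β ^ 3 - α * β ^ 2) • (y * x + x * y)
  + (β ^ 4 - 2 * β - 3 * α * β ^ 2 + α ^ 2) • (x ^ 2 + y ^ 2)
  + (1 + 4 * α * β + 3 * α ^ 2 * β ^ 2 - α ^ 3 - α * β ^ 4 - β ^ 3) • x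
  + (1 + 3 * α * β + 3 * α ^ 2 * β ^ 2 - α ^ 3 - α * β ^ 4) • y
  + algebraMap R A (3 * β ^ 2 - β ^ 5 - 2 * α - 3 * α ^ 2 * β + 4 * α * β ^ 3)

theorem map_R0elt {A B : Type*} [Ring A] [Ring B] [Algebra R A] [Algebra R B]
    (f : A →ₐ[R] B) (α β : R) (x y : A) :
    f (R0elt R α β x y) = R0elt R α β (f x) (f y) := by
  simp only [R0elt, map_add, map_mul, map_pow, map_smul, AlgHom.commutes]

inductive KRel (α β : R) (n : ℕ) : CubicHecke R α β n → CubicHecke R α β n → Prop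
  | r0 (j : Fin (n - 1)) (h : (j : ℕ) + 1 < n - 1) :
      KRel α β n (R0elt R α β (hb R α β n j) (hb R α β n ⟨(j : ℕ) + 1, h⟩)) 0

abbrev KAlg (α β : R) (n : ℕ) := RingQuot (KRel R α β n)

noncomputable def towerIncl (α β : R) (n : ℕ) :
    KAlg R α β n →ₐ[R] KAlg R α β (n + 1) :=
  RingQuot.liftAlgHom R
    ⟨(RingQuot.mkAlgHom R (KRel R α β (n + 1))).comp (heckeIncl R α β n),
      by
        rintro x y ⟨j, h⟩
        have hle : n - 1 ≤ n + 1 - 1 := by omega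
        have hlt : ((Fin.castLE hle j : Fin (n + 1 - 1)) : ℕ) + 1 < n + 1 - 1 := by
          simp only [Fin.coe_castLE]; omega
        have e3 : Fin.castLE hle ⟨(j : ℕ) + 1, h⟩
            = (⟨((Fin.castLE hle j : Fin (n + 1 - 1)) : ℕ) + 1, hlt⟩ : Fin (n + 1 - 1)) := by
          ext; simp
        rw [AlgHom.comp_apply, AlgHom.comp_apply, map_R0elt R (heckeIncl R α β n),
          heckeIncl_gen, heckeIncl_gen, e3, map_zero (heckeIncl R α β n)]
        exact RingQuot.mkAlgHom_rel R (KRel.r0 (Fin.castLE hle j) hlt)⟩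

/-- The class of the inverse `b_{i+1}⁻¹` in the cubic Hecke algebra. -/
noncomputable def hbInv (α β : R) (n : ℕ) (i : Fin (n - 1)) : CubicHecke R α β n :=
  RingQuot.mkAlgHom R (cubicRel R α β n)
    (MonoidAlgebra.of R (BraidGroup n) (braidGen n i)⁻¹)

/-- The class of the generator `b_{i+1}` in `K_n(α,β)`. -/
noncomputable def kb (α β : R) (n : ℕ) (i : Fin (n - 1)) : KAlg R α β n :=
  RingQuot.mkAlgHom R (KRel R α β n) (hb R α β n i)

/-- The class of `b_{i+1}⁻¹` in `K_n(α,β)`. -/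
noncomputable def kbInv (α β : R) (n : ℕ) (i : Fin (n - 1)) : KAlg R α β n :=
  RingQuot.mkAlgHom R (KRel R α β n) (hbInv R α β n i)

/-- The iterated tower map `K_n(α,β) → K_{n+k}(α,β)`. -/
noncomputable def towerInclMany (α β : R) (n : ℕ) :
    (k : ℕ) → (KAlg R α β n →ₐ[R] KAlg R α β (n + k))
  | 0 => AlgHom.id R _
  | k + 1 => (towerIncl R α β (n + k)).comp (towerInclMany α β n k)

/-- The class of the generator `b_n` in `K_{n+1}(α,β)` (for `n ≥ 1`). -/
noncomputable def lastGen (α β : R) (n : ℕ) (h : 1 ≤ n) : KAlg R α β (n + 1) :=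
  kb R α β (n + 1) ⟨n - 1, by omega⟩

/-- The class of `b_n⁻¹` in `K_{n+1}(α,β)` (for `n ≥ 1`). -/
noncomputable def lastGenInv (α β : R) (n : ℕ) (h : 1 ≤ n) : KAlg R α β (n + 1) :=
  kbInv R α β (n + 1) ⟨n - 1, by omega⟩

/-- An admissible functional with parameters `(z, z̄)` on the tower of the algebras
`K_n(α,β)`: a compatible family of `R`-linear functionals satisfying the Markov-type
conditions for the last generator and its inverse. -/
structure AdmissibleFunctional (α β z zbar : R) : Type _ where
  T : ∀ n : ℕ, KAlg R α β n →ₗ[R] R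
  compat : ∀ (n : ℕ) (x : KAlg R α β n), T (n + 1) (towerIncl R α β n x) = T n x
  cond_z : ∀ (n : ℕ) (h : 1 ≤ n) (x y : KAlg R α β n),
      T (n + 1) (towerIncl R α β n x * lastGen R α β n h * towerIncl R α β n y)
        = z * T n (x * y)
  cond_zbar : ∀ (n : ℕ) (h : 1 ≤ n) (x y : KAlg R α β n),
      T (n + 1) (towerIncl R α β n x * lastGenInv R α β n h * towerIncl R α β n y)
        = zbar * T n (x * y)

/-- A Markov trace is an admissible functional each of whose components is a trace. -/
def AdmissibleFunctional.IsMarkov {α β z zbar : R}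
    (T : AdmissibleFunctional R α β z zbar) : Prop :=
  ∀ (n : ℕ) (a b : KAlg R α β n), T.T n (a * b) = T.T n (b * a)

/-- A normalized functional takes the value `1` on the unit of `K₁(α,β)`. -/
def AdmissibleFunctional.IsNormalized {α β z zbar : R}
    (T : AdmissibleFunctional R α β z zbar) : Prop :=
  T.T 1 1 = 1

-- ===================== auxiliary material =====================

/-- The inversion automorphism of the braid group, `b_i ↦ b_i⁻¹`. -/
noncomputable def braidInv (n : ℕ) : BraidGroup n →* BraidGroup n :=
  PresentedGroup.toGroup
    (f := fun i => (braidGen n i)⁻¹)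
    (by
      rintro r (⟨i, j, hij, rfl⟩ | ⟨i, j, hij, rfl⟩)
      · have h1 := braid_mk_eq_one (m := n - 1) (Or.inl ⟨i, j, hij, rfl⟩)
        simp only [map_mul, map_inv, FreeGroup.lift_apply_of] at h1 ⊢
        have h1' : braidGen n i * braidGen n j * (braidGen n i)⁻¹ * (braidGen n j)⁻¹ = 1 := h1
        have hc : Commute (braidGen n i) (braidGen n j) :=
          commutatorElement_eq_one_iff_commute.mp h1'
        exact commutatorElement_eq_one_iff_commute.mpr hc.inv_inv
      · have h1 := braid_mk_eq_one (m := n - 1) (Or.inr ⟨i, j, hij, rfl⟩)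
        simp only [map_mul, map_inv, FreeGroup.lift_apply_of] at h1 ⊢
        have e : braidGen n i * braidGen n j * braidGen n i
            = braidGen n j * braidGen n i * braidGen n j := mul_inv_eq_one.mp h1
        rw [mul_inv_eq_one, show (braidGen n i)⁻¹ * (braidGen n j)⁻¹ * (braidGen n i)⁻¹
            = (braidGen n i * braidGen n j * braidGen n i)⁻¹ by group, e]
        group)

theorem braidInv_gen (n : ℕ) (i : Fin (n - 1)) :
    braidInv n (braidGen n i) = (braidGen n i)⁻¹ :=
  PresentedGroup.toGroup.of _

theorem braidInv_braidInv (n : ℕ) (g : BraidGroup n) : braidInv n (braidInv n g) = g := by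
  have h : (braidInv n).comp (braidInv n) = MonoidHom.id (BraidGroup n) :=
    PresentedGroup.ext fun i => by
      simp only [MonoidHom.comp_apply, MonoidHom.id_apply]
      rw [show (PresentedGroup.of i : BraidGroup n) = braidGen n i from rfl, braidInv_gen,
        map_inv, braidInv_gen, inv_inv]
  exact DFunLike.congr_fun h g

theorem mapDomain_gbInv (n : ℕ) (i : Fin (n - 1)) :
    (MonoidAlgebra.mapDomainAlgHom R R (braidInv n)) (gb R n i)
      = MonoidAlgebra.of R (BraidGroup n) (braidGen n i)⁻¹ := by
  simp only [gb, MonoidAlgebra.mapDomainAlgHom_apply, MonoidAlgebra.of_apply,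
    MonoidAlgebra.mapDomain_single, braidInv_gen]

theorem hbInv_mul_hb (α β : R) (n : ℕ) (i : Fin (n - 1)) :
    hbInv R α β n i * hb R α β n i = 1 := by
  rw [hbInv, hb, gb, ← map_mul, ← map_mul, inv_mul_cancel, map_one, map_one]

theorem hb_mul_hbInv (α β : R) (n : ℕ) (i : Fin (n - 1)) :
    hb R α β n i * hbInv R α β n i = 1 := by
  rw [hbInv, hb, gb, ← map_mul, ← map_mul, mul_inv_cancel, map_one, map_one]

theorem hb_cubic (α β : R) (n : ℕ) (i : Fin (n - 1)) :
    hb R α β n i ^ 3 = α • hb R α β n i ^ 2 + β • hb R α β n i + 1 := by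
  have h := RingQuot.mkAlgHom_rel R (cubicRel.cube (R := R) (α := α) (β := β) (n := n) i)
  simpa only [hb, map_pow, map_add, map_smul, map_one] using h

theorem hb_braid (α β : R) (n : ℕ) (j : Fin (n - 1)) (h : (j : ℕ) + 1 < n - 1) :
    hb R α β n j * hb R α β n ⟨(j : ℕ) + 1, h⟩ * hb R α β n j
      = hb R α β n ⟨(j : ℕ) + 1, h⟩ * hb R α β n j * hb R α β n ⟨(j : ℕ) + 1, h⟩ := by
  have hg : braidGen n j * braidGen n ⟨(j : ℕ) + 1, h⟩ * braidGen n j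
      = braidGen n ⟨(j : ℕ) + 1, h⟩ * braidGen n j * braidGen n ⟨(j : ℕ) + 1, h⟩ := by
    have h1 := braid_mk_eq_one (m := n - 1) (Or.inr ⟨j, ⟨(j : ℕ) + 1, h⟩, rfl, rfl⟩)
    simp only [map_mul, map_inv] at h1
    exact mul_inv_eq_one.mp h1
  simp only [hb, gb, ← map_mul]
  rw [hg]
theorem inv_poly' {A : Type*} [Ring A] [Algebra R A] {α β : R} {x u : A}
    (h1 : u * x = 1) (hcube : x ^ 3 = α • x ^ 2 + β • x + 1) :
    u = x * x - α • x - β • (1 : A) := by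
  have hc' : x * x * x = α • (x * x) + β • x + 1 := by
    simpa [pow_succ, pow_zero, one_mul] using hcube
  have hq : x * (x * x - α • x - β • (1 : A)) = 1 := by
    calc x * (x * x - α • x - β • (1 : A))
        = x * x * x - α • (x * x) - β • x := by
          simp only [mul_sub, mul_smul_comm, mul_one, mul_assoc]
      _ = 1 := by rw [hc']; module
  calc u = u * (x * (x * x - α • x - β • (1 : A))) := by rw [hq, mul_one]
    _ = u * x * (x * x - α • x - β • (1 : A)) := by rw [mul_assoc]
    _ = x * x - α • x - β • (1 : A) := by rw [h1, one_mul]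

theorem inv_cubic_facts {A : Type*} [Ring A] [Algebra R A] {α β : R} {x u : A}
    (h1 : u * x = 1) (hcube : x ^ 3 = α • x ^ 2 + β • x + 1) :
    u ^ 3 + β • u ^ 2 + α • u - 1 = -(u ^ 3 * (x ^ 3 - α • x ^ 2 - β • x - 1)) ∧
    u ^ 3 + β • u ^ 2 + α • u - 1 = 0 := by
  have e2 : u ^ 2 * x ^ 2 = 1 := by
    calc u ^ 2 * x ^ 2 = u * (u * x) * x := by noncomm_ring
      _ = 1 := by rw [h1, mul_one, h1]
  have e1 : u ^ 3 * x ^ 3 = 1 := by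
    calc u ^ 3 * x ^ 3 = u ^ 2 * (u * x) * x ^ 2 := by noncomm_ring
      _ = 1 := by rw [h1, mul_one, e2]
  have e3 : u ^ 3 * x ^ 2 = u := by
    calc u ^ 3 * x ^ 2 = u * (u ^ 2 * x ^ 2) := by noncomm_ring
      _ = u := by rw [e2, mul_one]
  have e4 : u ^ 3 * x = u ^ 2 := by
    calc u ^ 3 * x = u ^ 2 * (u * x) := by noncomm_ring
      _ = u ^ 2 := by rw [h1, mul_one]
  have key : (1 : A) = α • u + β • u ^ 2 + u ^ 3 := by
    calc (1 : A) = u ^ 3 * x ^ 3 := e1.symm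
      _ = u ^ 3 * (α • x ^ 2 + β • x + 1) := by rw [hcube]
      _ = α • (u ^ 3 * x ^ 2) + β • (u ^ 3 * x) + u ^ 3 := by
          simp only [mul_add, mul_smul_comm, mul_one]
      _ = α • u + β • u ^ 2 + u ^ 3 := by rw [e3, e4]
  have key2 : α • u + β • u ^ 2 + u ^ 3 = 1 := key.symm
  constructor
  · have hr : u ^ 3 * (x ^ 3 - α • x ^ 2 - β • x - 1)
        = 1 - α • u - β • u ^ 2 - u ^ 3 := by
      calc u ^ 3 * (x ^ 3 - α • x ^ 2 - β • x - 1)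
          = u ^ 3 * x ^ 3 - α • (u ^ 3 * x ^ 2) - β • (u ^ 3 * x) - u ^ 3 := by
            simp only [mul_sub, mul_smul_comm, mul_one]
        _ = 1 - α • u - β • u ^ 2 - u ^ 3 := by rw [e1, e3, e4]
    rw [hr]
    module
  · calc u ^ 3 + β • u ^ 2 + α • u - 1 = (α • u + β • u ^ 2 + u ^ 3) - 1 := by module
      _ = 0 := by rw [key2, sub_self]

theorem inv_cubic' {A : Type*} [Ring A] [Algebra R A] {α β : R} {x u : A}
    (h1 : u * x = 1) (hcube : x ^ 3 = α • x ^ 2 + β • x + 1) :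
    u ^ 3 = (-β) • u ^ 2 + (-α) • u + 1 := by
  have h := (inv_cubic_facts R h1 hcube).2
  calc u ^ 3 = (u ^ 3 + β • u ^ 2 + α • u - 1) + ((-β) • u ^ 2 + (-α) • u + 1) := by module
    _ = (-β) • u ^ 2 + (-α) • u + 1 := by rw [h, zero_add]
set_option maxHeartbeats 1000000 in
theorem sq_red {A : Type*} [Ring A] [Algebra R A] (α β : R) (x u : A)
    (hx : x ^ 3 = α • x ^ 2 + β • x + 1)
    (hu : u = x * x - α • x - β • (1 : A)) :
    u * u = ((-1 : R) * β) • (x * x) + ((1 : R) + (1 : R) * α * β) • x + ((1 : R) * β ^ 2 + (-1 : R) * α) • (1 : A) := by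
  have hg0 : x * x * x - (α • (x * x) + β • x + 1) = 0 := by
    have h := hx; simp only [pow_succ, pow_zero, one_mul] at h
    exact sub_eq_zero_of_eq h
  have cert : (x * x - α • x - β • (1 : A)) * (x * x - α • x - β • (1 : A))
      = ((-1 : R) * β) • (x * x) + ((1 : R) + (1 : R) * α * β) • x + ((1 : R) * β ^ 2 + (-1 : R) * α) • (1 : A)
      + (((-1 : R) * α) • ((x * x * x - (α • (x * x) + β • x + 1)))
      + ((1 : R)) • ((x * x * x - (α • (x * x) + β • x + 1)) * x)) := by
    simp only [mul_add, add_mul, mul_sub, sub_mul, smul_add, smul_sub, smul_smul,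
      mul_smul_comm, smul_mul_assoc, mul_one, one_mul, mul_assoc]
    module
  rw [hu, cert, hg0]
  simp only [mul_zero, zero_mul, smul_zero, add_zero, zero_add]

set_option maxHeartbeats 4000000 in
theorem R0_key {A : Type*} [Ring A] [Algebra R A] (α β : R) (x y u v : A)
    (hx : x ^ 3 = α • x ^ 2 + β • x + 1) (hy : y ^ 3 = α • y ^ 2 + β • y + 1)
    (hbr : x * y * x = y * x * y)
    (hu : u = x * x - α • x - β • (1 : A)) (hv : v = y * y - α • y - β • (1 : A))
    (huu : u * u = ((-1 : R) * β) • (x * x) + ((1 : R) + (1 : R) * α * β) • x + ((1 : R) * β ^ 2 + (-1 : R) * α) • (1 : A))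
    (hvv : v * v = ((-1 : R) * β) • (y * y) + ((1 : R) + (1 : R) * α * β) • y + ((1 : R) * β ^ 2 + (-1 : R) * α) • (1 : A)) :
    R0elt R (-β) (-α) u v = x * R0elt R α β x y := by
  have hg0 : x * x * x - (α • (x * x) + β • x + 1) = 0 := by
    have h := hx; simp only [pow_succ, pow_zero, one_mul] at h
    exact sub_eq_zero_of_eq h
  have hg1 : y * y * y - (α • (y * y) + β • y + 1) = 0 := by
    have h := hy; simp only [pow_succ, pow_zero, one_mul] at h
    exact sub_eq_zero_of_eq h
  have hg2 : y * x * y - x * y * x = 0 := sub_eq_zero_of_eq hbr.symm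
  have cert : R0elt R (-β) (-α) u v = x * R0elt R α β x y
      + (((-1 : R) * β ^ 4 + (3 : R) * α * β ^ 2 + (-2 : R) * α ^ 2) • ((x * x * x - (α • (x * x) + β • x + 1)))
      + ((-1 : R) * α) • ((x * x * x - (α • (x * x) + β • x + 1)) * x)
      + ((-1 : R) * β ^ 2 + (2 : R) * α + (-1 : R) * α * β ^ 3 + (2 : R) * α ^ 2 * β) • ((x * x * x - (α • (x * x) + β • x + 1)) * y)
      + ((-1 : R) + (-1 : R) * α * β + (-1 : R) * α ^ 2 * β ^ 2 + (1 : R) * α ^ 3) • ((x * x * x - (α • (x * x) + β • x + 1)) * y * x)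
      + ((1 : R) * α * β ^ 2 + (-1 : R) * α ^ 2) • ((x * x * x - (α • (x * x) + β • x + 1)) * y * x * x)
      + ((1 : R) * α ^ 2 * β) • ((x * x * x - (α • (x * x) + β • x + 1)) * y * x * x * y)
      + ((-1 : R) * α * β) • ((x * x * x - (α • (x * x) + β • x + 1)) * y * x * x * y * y)
      + ((-1 : R) + (1 : R) * β ^ 3 + (-2 : R) * α * β) • ((x * x * x - (α • (x * x) + β • x + 1)) * y * y)
      + ((1 : R) * β + (1 : R) * α * β ^ 2 + (-1 : R) * α ^ 2) • ((x * x * x - (α • (x * x) + β • x + 1)) * y * y * x)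
      + ((-1 : R) * β ^ 2 + (1 : R) * α) • ((x * x * x - (α • (x * x) + β • x + 1)) * y * y * x * x)
      + ((-1 : R) * α * β ^ 2 + (1 : R) * α ^ 2) • ((y * y * y - (α • (y * y) + β • y + 1)))
      + ((1 : R) * β ^ 2 + (-1 : R) * α) • ((y * y * y - (α • (y * y) + β • y + 1)) * y)
      + ((1 : R) * α ^ 2 + (1 : R) * α ^ 3 * β) • ((y * x * y - x * y * x))
      + ((-1 : R) * α + (-1 : R) * α ^ 2 * β) • ((y * x * y - x * y * x) * x)
      + ((-1 : R) * α * β ^ 2) • ((y * x * y - x * y * x) * x * x * y)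
      + ((1 : R) * β ^ 2) • ((y * x * y - x * y * x) * x * x * y * y)
      + ((1 : R) + (1 : R) * α * β) • ((y * x * y - x * y * x) * x * y)
      + ((-1 : R) * α ^ 2 * β) • ((y * x * y - x * y * x) * x * y * x * y)
      + ((1 : R) * α * β) • ((y * x * y - x * y * x) * x * y * x * y * x)
      + ((-1 : R) * β) • ((y * x * y - x * y * x) * x * y * x * y * x * y)
      + ((1 : R) * α * β) • ((y * x * y - x * y * x) * x * y * x * y * y)
      + ((-1 : R) * α + (-1 : R) * α ^ 2 * β) • ((y * x * y - x * y * x) * y)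
      + ((-1 : R) * α * β) • (x * (x * x * x - (α • (x * x) + β • x + 1)) * y * x * x * y)
      + ((1 : R) * β ^ 2) • (x * (y * y * y - (α • (y * y) + β • y + 1)))
      + ((-1 : R) * α + (-1 : R) * α * β ^ 3 + (-1 : R) * α ^ 2 * β) • (x * (y * x * y - x * y * x))
      + ((1 : R) * α * β + (-1 : R) * α ^ 2 * β ^ 2) • (x * (y * x * y - x * y * x) * x)
      + ((1 : R) * α * β ^ 2) • (x * (y * x * y - x * y * x) * x * x)
      + ((1 : R) * α * β ^ 2 + (-1 : R) * α ^ 3 * β) • (x * (y * x * y - x * y * x) * x * y)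
      + ((1 : R) * α ^ 2 * β) • (x * (y * x * y - x * y * x) * x * y * x)
      + ((-1 : R) * β) • (x * (y * x * y - x * y * x) * x * y * x * y * x)
      + ((1 : R) * α ^ 2 * β) • (x * (y * x * y - x * y * x) * x * y * y)
      + ((1 : R) * β ^ 3) • (x * (y * x * y - x * y * x) * y)
      + ((1 : R) * β ^ 3) • (x * x * (y * x * y - x * y * x))
      + ((1 : R) * α * β ^ 2) • (x * x * (y * x * y - x * y * x) * x)
      + ((-1 : R) * β ^ 2) • (x * x * (y * x * y - x * y * x) * x * x)
      + ((2 : R) * α ^ 2 * β) • (x * x * (y * x * y - x * y * x) * x * y)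
      + ((-1 : R) * α * β) • (x * x * (y * x * y - x * y * x) * x * y * x)
      + ((-1 : R) * α * β) • (x * x * (y * x * y - x * y * x) * x * y * y)
      + ((-1 : R) * α * β) • (x * x * x * (y * x * y - x * y * x) * x * y)
      + ((-1 : R) * β ^ 2) • (x * x * x * y * (x * x * x - (α • (x * x) + β • x + 1)))
      + ((1 : R) * α * β) • (x * x * x * y * x * (y * x * y - x * y * x))
      + ((1 : R) * α * β ^ 2) • (x * x * y * (x * x * x - (α • (x * x) + β • x + 1)))
      + ((1 : R) * α * β) • (x * x * y * (x * x * x - (α • (x * x) + β • x + 1)) * y * x)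
      + ((-1 : R) * β) • (x * x * y * (x * x * x - (α • (x * x) + β • x + 1)) * y * x * x)
      + ((-2 : R) * α ^ 2 * β) • (x * x * y * x * (y * x * y - x * y * x))
      + ((1 : R) * α * β) • (x * x * y * x * (y * x * y - x * y * x) * x)
      + ((1 : R) * α * β) • (x * x * y * x * (y * x * y - x * y * x) * y)
      + ((1 : R) * α * β) • (x * x * y * x * x * (y * x * y - x * y * x))
      + ((-1 : R) * β) • (x * x * y * x * x * (y * x * y - x * y * x) * x)
      + ((-1 : R) * α * β ^ 2) • (x * y * (x * x * x - (α • (x * x) + β • x + 1)) * y)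
      + ((-1 : R) * α ^ 2 * β) • (x * y * (x * x * x - (α • (x * x) + β • x + 1)) * y * x)
      + ((1 : R) * α * β) • (x * y * (x * x * x - (α • (x * x) + β • x + 1)) * y * x * x)
      + ((1 : R) * α * β) • (x * y * (x * x * x - (α • (x * x) + β • x + 1)) * y * x * y)
      + ((1 : R) * β ^ 2) • (x * y * (x * x * x - (α • (x * x) + β • x + 1)) * y * y)
      + ((1 : R) * α * β) • (x * y * (y * x * y - x * y * x))
      + ((1 : R) * α ^ 3 * β) • (x * y * x * (y * x * y - x * y * x))
      + ((-1 : R) * α ^ 2 * β) • (x * y * x * (y * x * y - x * y * x) * x)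
      + ((1 : R) * β) • (x * y * x * (y * x * y - x * y * x) * x * y * x)
      + ((-1 : R) * α ^ 2 * β) • (x * y * x * (y * x * y - x * y * x) * y)
      + ((-1 : R) * α ^ 2 * β) • (x * y * x * x * (y * x * y - x * y * x))
      + ((1 : R) * α * β) • (x * y * x * x * (y * x * y - x * y * x) * x)
      + ((1 : R) * α * β) • (x * y * x * x * (y * x * y - x * y * x) * y)
      + ((-1 : R) * β) • (x * y * x * x * y * x * (y * x * y - x * y * x))
      + ((-1 : R) * α * β) • (y * (x * x * x - (α • (x * x) + β • x + 1)) * y * x * x * y)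
      + ((1 : R) * β) • (y * (x * x * x - (α • (x * x) + β • x + 1)) * y * x * x * y * y)
      + ((-1 : R) * α + (-1 : R) * α ^ 2 * β) • (y * (y * x * y - x * y * x))
      + ((1 : R) + (1 : R) * α * β) • (y * (y * x * y - x * y * x) * y)
      + ((1 : R) * α ^ 2 * β) • (y * x * (y * x * y - x * y * x) * x * y)
      + ((-1 : R) * α * β) • (y * x * (y * x * y - x * y * x) * x * y * x)
      + ((1 : R) * β) • (y * x * (y * x * y - x * y * x) * x * y * x * y)
      + ((-1 : R) * α * β) • (y * x * (y * x * y - x * y * x) * x * y * y)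
      + ((-1 : R) * α * β) • (y * x * x * (y * x * y - x * y * x) * x * y)
      + ((1 : R) * β) • (y * x * x * (y * x * y - x * y * x) * x * y * y)
      + ((1 : R) * α * β) • (y * x * x * y * x * (y * x * y - x * y * x))
      + ((-1 : R) * β) • (y * x * x * y * x * (y * x * y - x * y * x) * y)) := by
    simp only [R0elt, Algebra.algebraMap_eq_smul_one]
    simp only [pow_succ, pow_zero, one_mul]
    simp only [huu, hvv]
    simp only [hu, hv]
    simp only [mul_add, add_mul, mul_sub, sub_mul, smul_add, smul_sub, smul_smul,
      mul_smul_comm, smul_mul_assoc, mul_one, one_mul, mul_assoc]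
    module
  rw [cert]
  simp only [hg0, hg1, hg2, mul_zero, zero_mul, smul_zero, add_zero, zero_add]
/-- The algebra homomorphism `H(Q_{α',β'},n) → H(Q_{α,β},n)` induced by `b_i ↦ b_i⁻¹`,
where `(α', β') = (-β, -α)`. -/
noncomputable def heckeInvHom (α β α' β' : R) (h1 : α' = -β) (h2 : β' = -α) (n : ℕ) :
    CubicHecke R α' β' n →ₐ[R] CubicHecke R α β n :=
  RingQuot.liftAlgHom R
    ⟨(RingQuot.mkAlgHom R (cubicRel R α β n)).comp
        (MonoidAlgebra.mapDomainAlgHom R R (braidInv n)),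
      by
        subst h1 h2
        rintro x y ⟨i⟩
        simp only [AlgHom.comp_apply, map_pow, map_add, map_smul, map_one, mapDomain_gbInv]
        have e : RingQuot.mkAlgHom R (cubicRel R α β n)
            (MonoidAlgebra.of R (BraidGroup n) (braidGen n i)⁻¹) = hbInv R α β n i := rfl
        rw [e]
        exact inv_cubic' R (hbInv_mul_hb R α β n i) (hb_cubic R α β n i)⟩

theorem heckeInvHom_hb (α β α' β' : R) (h1 : α' = -β) (h2 : β' = -α) (n : ℕ) (i : Fin (n - 1)) :
    heckeInvHom R α β α' β' h1 h2 n (hb R α' β' n i) = hbInv R α β n i := by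
  rw [hb, heckeInvHom, RingQuot.liftAlgHom_mkAlgHom_apply, AlgHom.comp_apply, mapDomain_gbInv]
  rfl

theorem heckeInvHom_hbInv (α β α' β' : R) (h1 : α' = -β) (h2 : β' = -α) (n : ℕ)
    (i : Fin (n - 1)) :
    heckeInvHom R α β α' β' h1 h2 n (hbInv R α' β' n i) = hb R α β n i := by
  rw [hbInv, heckeInvHom, RingQuot.liftAlgHom_mkAlgHom_apply, AlgHom.comp_apply]
  have e : (MonoidAlgebra.mapDomainAlgHom R R (braidInv n))
      (MonoidAlgebra.of R (BraidGroup n) (braidGen n i)⁻¹)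
      = MonoidAlgebra.of R (BraidGroup n) (braidGen n i) := by
    simp only [MonoidAlgebra.mapDomainAlgHom_apply, MonoidAlgebra.of_apply,
      MonoidAlgebra.mapDomain_single, map_inv, braidInv_gen, inv_inv]
  rw [e]
  rfl

theorem heckeInvHom_comp (α β α' β' : R) (h1 : α' = -β) (h2 : β' = -α)
    (h3 : α = -β') (h4 : β = -α') (n : ℕ) :
    (heckeInvHom R α β α' β' h1 h2 n).comp (heckeInvHom R α' β' α β h3 h4 n)
      = AlgHom.id R (CubicHecke R α β n) := by
  refine RingQuot.ringQuot_ext' R _ _ ?_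
  refine MonoidAlgebra.algHom_ext (fun g => ?_) (Subsingleton.elim _ _)
  simp only [AlgHom.comp_apply, heckeInvHom, RingQuot.liftAlgHom_mkAlgHom_apply,
    MonoidAlgebra.mapDomainAlgHom_apply, MonoidAlgebra.of_apply, MonoidAlgebra.mapDomain_single,
    AlgHom.coe_id, id_eq, braidInv_braidInv]

/-- The algebra isomorphism `H(Q_{-β,-α},n) ≅ H(Q_{α,β},n)` induced by `b_i ↦ b_i⁻¹`. -/
noncomputable def heckeInvEquiv (α β : R) (n : ℕ) :
    CubicHecke R (-β) (-α) n ≃ₐ[R] CubicHecke R α β n :=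
  AlgEquiv.ofAlgHom (heckeInvHom R α β (-β) (-α) rfl rfl n)
    (heckeInvHom R (-β) (-α) α β (neg_neg α).symm (neg_neg β).symm n)
    (heckeInvHom_comp R α β (-β) (-α) rfl rfl (neg_neg α).symm (neg_neg β).symm n)
    (heckeInvHom_comp R (-β) (-α) α β (neg_neg α).symm (neg_neg β).symm rfl rfl n)

theorem heckeInvEquiv_hb (α β : R) (n : ℕ) (i : Fin (n - 1)) :
    heckeInvEquiv R α β n (hb R (-β) (-α) n i) = hbInv R α β n i :=
  heckeInvHom_hb R α β (-β) (-α) rfl rfl n i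

theorem heckeInvEquiv_hbInv (α β : R) (n : ℕ) (i : Fin (n - 1)) :
    heckeInvEquiv R α β n (hbInv R (-β) (-α) n i) = hb R α β n i :=
  heckeInvHom_hbInv R α β (-β) (-α) rfl rfl n i
theorem heckeInvEquiv_R0 (α β : R) (n : ℕ) (j : Fin (n - 1)) (h : (j : ℕ) + 1 < n - 1) :
    heckeInvEquiv R α β n
        (R0elt R (-β) (-α) (hb R (-β) (-α) n j) (hb R (-β) (-α) n ⟨(j : ℕ) + 1, h⟩))
      = hb R α β n j * R0elt R α β (hb R α β n j) (hb R α β n ⟨(j : ℕ) + 1, h⟩) := by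
  have e := map_R0elt R (heckeInvEquiv R α β n).toAlgHom (-β) (-α)
    (hb R (-β) (-α) n j) (hb R (-β) (-α) n ⟨(j : ℕ) + 1, h⟩)
  simp only [AlgEquiv.coe_toAlgHom] at e
  rw [e, heckeInvEquiv_hb, heckeInvEquiv_hb]
  exact R0_key R α β _ _ _ _
    (hb_cubic R α β n j) (hb_cubic R α β n ⟨(j : ℕ) + 1, h⟩)
    (hb_braid R α β n j h)
    (inv_poly' R (hbInv_mul_hb R α β n j) (hb_cubic R α β n j))
    (inv_poly' R (hbInv_mul_hb R α β n ⟨(j : ℕ) + 1, h⟩) (hb_cubic R α β n ⟨(j : ℕ) + 1, h⟩))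
    (sq_red R α β _ _ (hb_cubic R α β n j)
      (inv_poly' R (hbInv_mul_hb R α β n j) (hb_cubic R α β n j)))
    (sq_red R α β _ _ (hb_cubic R α β n ⟨(j : ℕ) + 1, h⟩)
      (inv_poly' R (hbInv_mul_hb R α β n ⟨(j : ℕ) + 1, h⟩) (hb_cubic R α β n ⟨(j : ℕ) + 1, h⟩)))

theorem heckeInvEquiv_symm_R0 (α β : R) (n : ℕ) (j : Fin (n - 1)) (h : (j : ℕ) + 1 < n - 1) :
    (heckeInvEquiv R α β n).symm
        (R0elt R α β (hb R α β n j) (hb R α β n ⟨(j : ℕ) + 1, h⟩))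
      = hb R (-β) (-α) n j *
          R0elt R (-β) (-α) (hb R (-β) (-α) n j) (hb R (-β) (-α) n ⟨(j : ℕ) + 1, h⟩) := by
  rw [AlgEquiv.symm_apply_eq, map_mul, heckeInvEquiv_hb, heckeInvEquiv_R0, ← mul_assoc,
    hbInv_mul_hb, one_mul]

/-- The forward map `K_n(-β,-α) → K_n(α,β)`. -/
noncomputable def kInvHomF (α β : R) (n : ℕ) : KAlg R (-β) (-α) n →ₐ[R] KAlg R α β n :=
  RingQuot.liftAlgHom R
    ⟨(RingQuot.mkAlgHom R (KRel R α β n)).comp (heckeInvEquiv R α β n).toAlgHom,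
      by
        rintro x y ⟨j, h⟩
        simp only [AlgHom.comp_apply, AlgEquiv.coe_toAlgHom, map_zero]
        rw [heckeInvEquiv_R0 R α β n j h, map_mul]
        have e0 : RingQuot.mkAlgHom R (KRel R α β n)
            (R0elt R α β (hb R α β n j) (hb R α β n ⟨(j : ℕ) + 1, h⟩)) = 0 := by
          have := RingQuot.mkAlgHom_rel R (KRel.r0 (R := R) (α := α) (β := β) (n := n) j h)
          rwa [map_zero] at this
        rw [e0, mul_zero]⟩

/-- The backward map `K_n(α,β) → K_n(-β,-α)`. -/
noncomputable def kInvHomG (α β : R) (n : ℕ) : KAlg R α β n →ₐ[R] KAlg R (-β) (-α) n :=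
  RingQuot.liftAlgHom R
    ⟨(RingQuot.mkAlgHom R (KRel R (-β) (-α) n)).comp (heckeInvEquiv R α β n).symm.toAlgHom,
      by
        rintro x y ⟨j, h⟩
        simp only [AlgHom.comp_apply, AlgEquiv.coe_toAlgHom, map_zero]
        rw [heckeInvEquiv_symm_R0 R α β n j h, map_mul]
        have e0 : RingQuot.mkAlgHom R (KRel R (-β) (-α) n)
            (R0elt R (-β) (-α) (hb R (-β) (-α) n j) (hb R (-β) (-α) n ⟨(j : ℕ) + 1, h⟩))
            = 0 := by
          have := RingQuot.mkAlgHom_rel R (KRel.r0 (R := R) (α := -β) (β := -α) (n := n) j h)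
          rwa [map_zero] at this
        rw [e0, mul_zero]⟩

/-- The induced isomorphism `K_n(-β,-α) ≅ K_n(α,β)`. -/
noncomputable def kInvEquiv (α β : R) (n : ℕ) : KAlg R (-β) (-α) n ≃ₐ[R] KAlg R α β n :=
  AlgEquiv.ofAlgHom (kInvHomF R α β n) (kInvHomG R α β n)
    (by
      refine RingQuot.ringQuot_ext' R _ _ ?_
      refine AlgHom.ext fun z => ?_
      simp only [kInvHomF, kInvHomG, AlgHom.comp_apply, RingQuot.liftAlgHom_mkAlgHom_apply,
        AlgEquiv.coe_toAlgHom, AlgHom.coe_id, id_eq,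
        AlgEquiv.apply_symm_apply])
    (by
      refine RingQuot.ringQuot_ext' R _ _ ?_
      refine AlgHom.ext fun z => ?_
      simp only [kInvHomF, kInvHomG, AlgHom.comp_apply, RingQuot.liftAlgHom_mkAlgHom_apply,
        AlgEquiv.coe_toAlgHom, AlgHom.coe_id, id_eq,
        AlgEquiv.symm_apply_apply])

theorem kInvEquiv_kb (α β : R) (n : ℕ) (i : Fin (n - 1)) :
    kInvEquiv R α β n (kb R (-β) (-α) n i) = kbInv R α β n i := by
  have e : kInvEquiv R α β n (kb R (-β) (-α) n i) = kInvHomF R α β n (kb R (-β) (-α) n i) := rfl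
  rw [e, kb, kInvHomF, RingQuot.liftAlgHom_mkAlgHom_apply, AlgHom.comp_apply]
  simp only [AlgEquiv.coe_toAlgHom]
  rw [heckeInvEquiv_hb]
  rfl


/-- The map `b_i ↦ b_i⁻¹` gives an `R`-algebra isomorphism
`H(Q_{−β,−α},n) ≅ H(Q_{α,β},n)` mapping the ideal `I_n` onto `I_n` (with the image of
`R₀(j)` being `b_j·R₀(j)`), and hence an isomorphism `K_n(−β,−α) ≅ K_n(α,β)`. -/
theorem statement_18 (R : Type) [CommRing R] (α β : R) (n : ℕ) (hn : 2 ≤ n) :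
    -- the cubic identity for the inverse generators in `H(Q_{α,β},n)`
    (∀ i : Fin (n - 1),
      hbInv R α β n i ^ 3 + β • hbInv R α β n i ^ 2 + α • hbInv R α β n i - 1
        = -(hbInv R α β n i ^ 3 *
            (hb R α β n i ^ 3 - α • hb R α β n i ^ 2 - β • hb R α β n i - 1)) ∧
      hbInv R α β n i ^ 3 + β • hbInv R α β n i ^ 2 + α • hbInv R α β n i - 1 = 0) ∧
    ∃ φ : CubicHecke R (-β) (-α) n ≃ₐ[R] CubicHecke R α β n,
      -- `φ` is induced by `b_i ↦ b_i⁻¹`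
      (∀ i : Fin (n - 1), φ (hb R (-β) (-α) n i) = hbInv R α β n i) ∧
      -- the image of `R₀(j)` with parameters `(−β,−α)` is `b_j·R₀(j)` with parameters
      -- `(α,β)`
      (∀ (j : Fin (n - 1)) (h : (j : ℕ) + 1 < n - 1),
        φ (R0elt R (-β) (-α) (hb R (-β) (-α) n j) (hb R (-β) (-α) n ⟨(j : ℕ) + 1, h⟩))
          = hb R α β n j *
            R0elt R α β (hb R α β n j) (hb R α β n ⟨(j : ℕ) + 1, h⟩)) ∧
      -- `φ` maps the two-sided ideal `I_n` onto `I_n`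
      (φ '' (TwoSidedIdeal.span
          { w | ∃ (j : Fin (n - 1)) (h : (j : ℕ) + 1 < n - 1),
              w = R0elt R (-β) (-α) (hb R (-β) (-α) n j)
                    (hb R (-β) (-α) n ⟨(j : ℕ) + 1, h⟩) } : Set (CubicHecke R (-β) (-α) n))
        = (TwoSidedIdeal.span
          { w | ∃ (j : Fin (n - 1)) (h : (j : ℕ) + 1 < n - 1),
              w = R0elt R α β (hb R α β n j)
                    (hb R α β n ⟨(j : ℕ) + 1, h⟩) } : Set (CubicHecke R α β n))) ∧
      -- hence an induced isomorphism `K_n(−β,−α) ≅ K_n(α,β)`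
      ∃ ψ : KAlg R (-β) (-α) n ≃ₐ[R] KAlg R α β n,
        ∀ i : Fin (n - 1), ψ (kb R (-β) (-α) n i) = kbInv R α β n i := by
  
  refine ⟨fun i => inv_cubic_facts R (hbInv_mul_hb R α β n i) (hb_cubic R α β n i),
    heckeInvEquiv R α β n, fun i => heckeInvEquiv_hb R α β n i,
    fun j h => heckeInvEquiv_R0 R α β n j h, ?_,
    kInvEquiv R α β n, fun i => kInvEquiv_kb R α β n i⟩
  apply Set.Subset.antisymm
  · rintro w ⟨z, hz, rfl⟩
    have hsub : { w | ∃ (j : Fin (n - 1)) (h : (j : ℕ) + 1 < n - 1),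
        w = R0elt R (-β) (-α) (hb R (-β) (-α) n j)
              (hb R (-β) (-α) n ⟨(j : ℕ) + 1, h⟩) }
        ⊆ ((TwoSidedIdeal.comap (heckeInvEquiv R α β n).toAlgHom
            (TwoSidedIdeal.span
              { w | ∃ (j : Fin (n - 1)) (h : (j : ℕ) + 1 < n - 1),
                  w = R0elt R α β (hb R α β n j)
                        (hb R α β n ⟨(j : ℕ) + 1, h⟩) })) : Set (CubicHecke R (-β) (-α) n)) := by
      rintro w' ⟨j, h, rfl⟩
      rw [SetLike.mem_coe, TwoSidedIdeal.mem_comap]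
      simp only [AlgEquiv.coe_toAlgHom]
      rw [heckeInvEquiv_R0 R α β n j h]
      exact TwoSidedIdeal.mul_mem_left _ _ _ (TwoSidedIdeal.subset_span ⟨j, h, rfl⟩)
    have h2 := TwoSidedIdeal.mem_span_iff.mp hz _ hsub
    rw [TwoSidedIdeal.mem_comap] at h2
    simpa using h2
  · intro w hw
    refine ⟨(heckeInvEquiv R α β n).symm w, ?_, AlgEquiv.apply_symm_apply _ _⟩
    have hsub : { w | ∃ (j : Fin (n - 1)) (h : (j : ℕ) + 1 < n - 1),
        w = R0elt R α β (hb R α β n j) (hb R α β n ⟨(j : ℕ) + 1, h⟩) }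
        ⊆ ((TwoSidedIdeal.comap (heckeInvEquiv R α β n).symm.toAlgHom
            (TwoSidedIdeal.span
              { w | ∃ (j : Fin (n - 1)) (h : (j : ℕ) + 1 < n - 1),
                  w = R0elt R (-β) (-α) (hb R (-β) (-α) n j)
                        (hb R (-β) (-α) n ⟨(j : ℕ) + 1, h⟩) })) : Set (CubicHecke R α β n)) := by
      rintro w' ⟨j, h, rfl⟩
      rw [SetLike.mem_coe, TwoSidedIdeal.mem_comap]
      simp only [AlgEquiv.coe_toAlgHom]
      rw [heckeInvEquiv_symm_R0 R α β n j h]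
      exact TwoSidedIdeal.mul_mem_left _ _ _ (TwoSidedIdeal.subset_span ⟨j, h, rfl⟩)
    have h2 := TwoSidedIdeal.mem_span_iff.mp hw _ hsub
    rw [TwoSidedIdeal.mem_comap] at h2
    simpa using h2
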